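/- The L.P.R. procedure does not satisfy monotonicity: there exist a preference profile (for 3 alternatives and 5 voters) in which some alternative x is an L.P.R. winner, and a second profile obtained from the first by a single voter moving x up one spot on his list (all else unchanged), in which x is not an L.P.R. winner. -/

import Mathlib

open Finset

attribute [local instance] Classical.propDecidable

noncomputable section

/-- A preference profile for `n` voters: each voter has a ballot, a list of
alternatives ordered from most preferred (head) to least preferred (last). -/
abbrev Profile (n : ℕ) (A : Type*) := Fin n → List A

variable {A : Type*} [DecidableEq A]

/-- A valid profile: every ballot is a strict linear order on the alternatives,
i.e. a duplicate-free list containing every alternative. -/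
def IsProfile {n : ℕ} (P : Profile n A) : Prop :=
  ∀ i, (P i).Nodup ∧ ∀ a : A, a ∈ P i

/-- The voter with ballot `l` prefers `x` to `y`. -/
def Prefers (l : List A) (x y : A) : Prop := l.idxOf x < l.idxOf y

/-- The number of voters who rank `a` last (at the bottom of their list). -/
def lastCount {n : ℕ} (P : Profile n A) (a : A) : ℕ :=
  (univ.filter fun i => (P i).getLast? = some a).card

/-- The number of voters who rank `a` first (at the top of their list). -/
def firstCount {n : ℕ} (P : Profile n A) (a : A) : ℕ :=
  (univ.filter fun i => (P i).head? = some a).card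

/-- The number of voters preferring `x` to `y`. -/
def prefCount {n : ℕ} (P : Profile n A) (x y : A) : ℕ :=
  (univ.filter fun i => Prefers (P i) x y).card

/-- `x` defeats `y` in a pairwise majority contest: strictly more voters
prefer `x` to `y` than prefer `y` to `x`. -/
def Defeats {n : ℕ} (P : Profile n A) (x y : A) : Prop :=
  prefCount P y x < prefCount P x y

/-- Condorcet's method: the winners are the alternatives defeated by no other alternative. -/
def CondorcetWinners {n : ℕ} (P : Profile n A) : Set A :=
  {a | ∀ b, ¬ Defeats P b a}

/-- `a` is a Condorcet winner: it is the unique winner of Condorcet's method. -/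
def IsCondorcetWinner {n : ℕ} (P : Profile n A) (a : A) : Prop :=
  CondorcetWinners P = {a}

/-- The bottom alternative of ballot `l` among the still-remaining alternatives `S`. -/
def bottomAmong (S : Finset A) (l : List A) : Option A :=
  (l.filter fun x => decide (x ∈ S)).getLast?

/-- The number of voters ranking `a` last among the remaining alternatives `S`. -/
def hLastCount {n : ℕ} (P : Profile n A) (S : Finset A) (a : A) : ℕ :=
  (univ.filter fun i => bottomAmong S (P i) = some a).card

/-- One round of the L.P.R. procedure: delete from `S` the alternative(s)
currently appearing at the bottom of the largest number of lists,
i.e. keep those that are not maximal. -/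
def lprStep {n : ℕ} (P : Profile n A) (S : Finset A) : Finset A :=
  S.filter fun a => ∃ b ∈ S, hLastCount P S a < hLastCount P S b

/-- Iterating the L.P.R. rounds; once a round would delete every remaining
alternative, the process stops (those alternatives are the ones deleted last). -/
def lprIter {n : ℕ} [Fintype A] (P : Profile n A) : ℕ → Finset A
  | 0 => Finset.univ
  | k + 1 =>
      let S := lprIter P k
      if lprStep P S = ∅ then S else lprStep P S

/-- L.P.R. winners: the alternative(s) deleted in the final round. -/
def LPRWinners {n : ℕ} [Fintype A] (P : Profile n A) : Finset A :=
  lprIter P (Fintype.card A)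

/-- `l'` is obtained from `l` by moving `x` up exactly one spot. -/
def MovesUpOne (l l' : List A) (x : A) : Prop :=
  ∃ (u v : List A) (y : A), l = u ++ y :: x :: v ∧ l' = u ++ x :: y :: v

namespace LPRwork

def Pa : Profile 5 (Fin 3) := ![[0,1,2],[0,1,2],[0,2,1],[1,2,0],[1,2,0]]
def Pb : Profile 5 (Fin 3) := ![[0,1,2],[0,1,2],[0,1,2],[1,2,0],[1,2,0]]

lemma hLC (P : Profile 5 (Fin 3)) (S : Finset (Fin 3)) (a : Fin 3) (s : Finset (Fin 5))
    (h : ∀ i, bottomAmong S (P i) = some a ↔ i ∈ s) : hLastCount P S a = s.card := by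
  unfold hLastCount; congr 1; ext i; simp [h i]

lemma hPa : ∀ b, hLastCount Pa univ b = ![2,1,2] b := by
  intro b
  fin_cases b
  · exact hLC Pa univ 0 {3,4} (by intro i; fin_cases i <;> simp [Pa, bottomAmong, List.filter])
  · exact hLC Pa univ 1 {2} (by intro i; fin_cases i <;> simp [Pa, bottomAmong, List.filter])
  · exact hLC Pa univ 2 {0,1} (by intro i; fin_cases i <;> simp [Pa, bottomAmong, List.filter])

lemma stepPa : lprStep Pa univ = {1} := by
  unfold lprStep
  ext a
  simp only [mem_filter, mem_univ, true_and]
  constructor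
  · rintro ⟨b, hb⟩
    rw [hPa a, hPa b] at hb
    fin_cases a <;> fin_cases b <;> simp_all
  · intro h
    simp only [Finset.mem_singleton] at h
    subst h
    exact ⟨0, by rw [hPa, hPa]; norm_num⟩

lemma stepSelf (P : Profile 5 (Fin 3)) (c : Fin 3) : lprStep P {c} = ∅ := by
  unfold lprStep
  ext a
  simp only [mem_filter, Finset.mem_singleton, Finset.notMem_empty, iff_false, not_and]
  rintro rfl ⟨b, rfl, hlt⟩
  exact lt_irrefl _ hlt

lemma iterFix (P : Profile 5 (Fin 3)) (k : ℕ) (c : Fin 3) (h : lprIter P k = {c}) :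
    lprIter P (k+1) = {c} := by
  show (if lprStep P (lprIter P k) = ∅ then lprIter P k else lprStep P (lprIter P k)) = {c}
  rw [h, stepSelf, if_pos rfl]

lemma winPa : LPRWinners Pa = {1} := by
  have h1 : lprIter Pa 1 = {1} := by
    show (if lprStep Pa (lprIter Pa 0) = ∅ then lprIter Pa 0 else lprStep Pa (lprIter Pa 0)) = {1}
    have h0 : lprIter Pa 0 = univ := rfl
    rw [h0, stepPa, if_neg (by simp)]
  have h3 : lprIter Pa 3 = {1} := iterFix _ _ _ (iterFix _ _ _ h1)
  unfold LPRWinners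
  simpa using h3

lemma hPb : ∀ b, hLastCount Pb univ b = ![2,0,3] b := by
  intro b
  fin_cases b
  · exact hLC Pb univ 0 {3,4} (by intro i; fin_cases i <;> simp [Pb, bottomAmong, List.filter])
  · exact hLC Pb univ 1 ∅ (by intro i; fin_cases i <;> simp [Pb, bottomAmong, List.filter])
  · exact hLC Pb univ 2 {0,1,2} (by intro i; fin_cases i <;> simp [Pb, bottomAmong, List.filter])

lemma stepPb : lprStep Pb univ = {0,1} := by
  unfold lprStep
  ext a
  simp only [mem_filter, mem_univ, true_and]
  constructor
  · rintro ⟨b, hb⟩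
    rw [hPb a, hPb b] at hb
    fin_cases a <;> fin_cases b <;> simp_all
  · intro h
    fin_cases a
    · exact ⟨2, by rw [hPb, hPb]; decide⟩
    · exact ⟨2, by rw [hPb, hPb]; decide⟩
    · simp at h

lemma hPb2 : ∀ b, hLastCount Pb {0,1} b = ![2,3,0] b := by
  intro b
  fin_cases b
  · exact hLC Pb {0,1} 0 {3,4} (by intro i; fin_cases i <;> simp [Pb, bottomAmong, List.filter])
  · exact hLC Pb {0,1} 1 {0,1,2} (by intro i; fin_cases i <;> simp [Pb, bottomAmong, List.filter])
  · exact hLC Pb {0,1} 2 ∅ (by intro i; fin_cases i <;> simp [Pb, bottomAmong, List.filter])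

lemma stepPb2 : lprStep Pb {0,1} = {0} := by
  unfold lprStep
  ext a
  simp only [mem_filter]
  constructor
  · rintro ⟨ha, b, hbmem, hb⟩
    rw [hPb2 a, hPb2 b] at hb
    fin_cases a <;> fin_cases b <;> simp_all
  · intro h
    simp only [Finset.mem_singleton] at h
    subst h
    refine ⟨by simp, 1, by simp, by rw [hPb2, hPb2]; norm_num⟩

lemma winPb : LPRWinners Pb = {0} := by
  have h1 : lprIter Pb 1 = ({0,1} : Finset (Fin 3)) := by
    show (if lprStep Pb (lprIter Pb 0) = ∅ then lprIter Pb 0 else lprStep Pb (lprIter Pb 0)) = {0,1}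
    have h0 : lprIter Pb 0 = univ := rfl
    rw [h0, stepPb, if_neg (by simp)]
  have h2 : lprIter Pb 2 = {0} := by
    show (if lprStep Pb (lprIter Pb 1) = ∅ then lprIter Pb 1 else lprStep Pb (lprIter Pb 1)) = {0}
    rw [h1, stepPb2, if_neg (by simp)]
  have h3 : lprIter Pb 3 = {0} := iterFix _ _ _ h2
  unfold LPRWinners
  simpa using h3

end LPRwork

/-- the L.P.R. procedure does not satisfy monotonicity: there are a
profile (3 alternatives, 5 voters) at which `x` is an L.P.R. winner and a second
profile obtained from it by a single voter moving `x` up one spot, at which `x`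
is not an L.P.R. winner. -/


theorem lpr_not_monotone :
    ∃ (P P' : Profile 5 (Fin 3)) (x : Fin 3) (j : Fin 5),
      IsProfile P ∧ IsProfile P' ∧
      x ∈ LPRWinners P ∧
      (∀ i, i ≠ j → P' i = P i) ∧ MovesUpOne (P j) (P' j) x ∧
      x ∉ LPRWinners P' := by
  refine ⟨LPRwork.Pa, LPRwork.Pb, 1, 2, ?_, ?_, ?_, ?_, ?_, ?_⟩
  · intro i
    constructor
    · fin_cases i <;> simp [LPRwork.Pa]
    · intro a
      fin_cases i <;> fin_cases a <;> simp [LPRwork.Pa]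
  · intro i
    constructor
    · fin_cases i <;> simp [LPRwork.Pb]
    · intro a
      fin_cases i <;> fin_cases a <;> simp [LPRwork.Pb]
  · rw [LPRwork.winPa]; simp
  · intro i hi
    fin_cases i <;> simp_all [LPRwork.Pa, LPRwork.Pb]
  · exact ⟨[0], [], 2, by simp [LPRwork.Pa], by simp [LPRwork.Pb]⟩
  · rw [LPRwork.winPb]; simp
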